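/- Let $(x_i)_{i \geq 0}$ be a sequence of positive integers such that there exist $i_0 \geq 0$ and $N > 0$ with: for all $i \geq i_0$, there exists $1 \leq m_i \leq N$ with $x_{i + m_i} > x_i$. Then $\limsup_{k \to \infty} \frac{1}{k} \sum_{i=0}^{k-1} x_i = \infty$. -/

import Mathlib

private lemma gauss_aux : ∀ t : ℕ, 2 * ∑ k ∈ Finset.range t, ((k : ℤ) + 1) = t * (t + 1) := by
  intro t
  induction t with
  | zero => simp
  | succ t ih =>
    rw [Finset.sum_range_succ, mul_add, ih]
    push_cast
    ring

theorem stmt_5 (x : ℕ → ℤ) (hpos : ∀ i, 0 < x i)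
    (i0 N : ℕ) (hN : 0 < N)
    (h : ∀ i ≥ i0, ∃ m, 1 ≤ m ∧ m ≤ N ∧ x i < x (i + m)) :
    Filter.limsup
        (fun k => (((∑ i ∈ Finset.range k, x i : ℤ) : ℝ) / k : EReal))
        Filter.atTop = ⊤ := by
  classical
  have hf : ∀ i, ∃ m, 1 ≤ m ∧ (i0 ≤ i → (m ≤ N ∧ x i < x (i + m))) := by
    intro i
    by_cases hi : i0 ≤ i
    · obtain ⟨m, h1, h2, h3⟩ := h i hi
      exact ⟨m, h1, fun _ => ⟨h2, h3⟩⟩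
    · exact ⟨1, le_refl _, fun hi' => absurd hi' hi⟩
  choose f hf1 hf2 using hf
  set g : ℕ → ℕ := fun i => i + f i with hg
  set j : ℕ → ℕ := fun k => g^[k] i0 with hj
  have hjsucc : ∀ k, j (k + 1) = j k + f (j k) := by
    intro k
    simp only [hj, Function.iterate_succ_apply', hg]
  have hj0 : j 0 = i0 := rfl
  have hjge : ∀ k, i0 ≤ j k := by
    intro k
    induction k with
    | zero => simp [hj0]
    | succ k ih =>
      rw [hjsucc]
      have := hf1 (j k)
      omega
  have hjmono : StrictMono j := by
    apply strictMono_nat_of_lt_succ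
    intro k
    rw [hjsucc]
    have := hf1 (j k)
    omega
  have hjle : ∀ k, j k ≤ i0 + k * N := by
    intro k
    induction k with
    | zero => simp [hj0]
    | succ k ih =>
      rw [hjsucc]
      have := (hf2 (j k) (hjge k)).1
      have : j k + f (j k) ≤ i0 + k * N + N := by omega
      calc j k + f (j k) ≤ i0 + k * N + N := this
        _ = i0 + (k + 1) * N := by ring
  have hxval : ∀ k, x i0 + k ≤ x (j k) := by
    intro k
    induction k with
    | zero => simp [hj0]
    | succ k ih =>
      rw [hjsucc]
      have := (hf2 (j k) (hjge k)).2
      push_cast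
      push_cast at ih
      omega
  -- main sum bound
  have key : ∀ K : ℕ, ((K : ℕ) / 1 : ℕ) = K / 1 := fun _ => rfl
  have hsum : ∀ K : ℕ, ∀ t : ℕ, (∀ k < t, j k < K) →
      (t : ℤ) * t ≤ 2 * ∑ i ∈ Finset.range K, x i := by
    intro K t ht
    have hsub : (Finset.range t).image j ⊆ Finset.range K := by
      intro i hi
      simp only [Finset.mem_image, Finset.mem_range] at hi ⊢
      obtain ⟨k, hk, rfl⟩ := hi
      exact ht k hk
    have h1 : ∑ k ∈ Finset.range t, x (j k) ≤ ∑ i ∈ Finset.range K, x i := by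
      rw [← Finset.sum_image (fun a _ b _ hab => hjmono.injective hab)]
      exact Finset.sum_le_sum_of_subset_of_nonneg hsub
        (fun i _ _ => (hpos i).le)
    have h2 : ∑ k ∈ Finset.range t, ((k : ℤ) + 1) ≤ ∑ k ∈ Finset.range t, x (j k) := by
      apply Finset.sum_le_sum
      intro k _
      have := hxval k
      have := hpos i0
      omega
    have h3 := gauss_aux t
    nlinarith
  -- real lower bound eventually
  have hlow : ∀ᶠ K : ℕ in Filter.atTop,
      (K : ℝ) / (8 * (N : ℝ) ^ 2) ≤ ((∑ i ∈ Finset.range K, x i : ℤ) : ℝ) / K := by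
    filter_upwards [Filter.eventually_ge_atTop (2 * (i0 + N) + 1)] with K hK
    set t : ℕ := (K - i0) / N with htdef
    have hdm := Nat.div_add_mod (K - i0) N
    rw [← htdef] at hdm
    have hml := Nat.mod_lt (K - i0) hN
    have htK : K ≤ N * t + N * t := by omega
    have hjt : ∀ k < t, j k < K := by
      intro k hk
      have := hjle k
      have hkN : k * N < t * N := (Nat.mul_lt_mul_right hN).mpr hk
      have htN : t * N ≤ K - i0 := Nat.div_mul_le_self _ _
      omega
    have hS := hsum K t hjt
    have hSR : (t : ℝ) * t ≤ 2 * ((∑ i ∈ Finset.range K, x i : ℤ) : ℝ) := by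
      exact_mod_cast hS
    have hKR : (K : ℝ) ≤ (N : ℝ) * t + (N : ℝ) * t := by exact_mod_cast htK
    have hKpos : (0 : ℝ) < K := by
      have : 0 < K := by omega
      exact_mod_cast this
    have hNpos : (0 : ℝ) < N := by exact_mod_cast hN
    rw [div_le_div_iff₀ (by positivity) hKpos]
    nlinarith [sq_nonneg ((t : ℝ))]
  -- tendsto atTop of the real averages
  have htend : Filter.Tendsto
      (fun K : ℕ => ((∑ i ∈ Finset.range K, x i : ℤ) : ℝ) / K)
      Filter.atTop Filter.atTop := by
    apply Filter.tendsto_atTop_mono' _ hlow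
    exact (tendsto_natCast_atTop_atTop).atTop_div_const (by positivity)
  -- conclude
  have htendE : Filter.Tendsto
      (fun k : ℕ => (((∑ i ∈ Finset.range k, x i : ℤ) : ℝ) / k : EReal))
      Filter.atTop (nhds ⊤) := by
    rw [EReal.tendsto_nhds_top_iff_real]
    intro r
    filter_upwards [htend.eventually_gt_atTop r] with K hK
    have h2 : ((r : ℝ) : EReal) < ((((∑ i ∈ Finset.range K, x i : ℤ) : ℝ) / (K : ℝ) : ℝ) : EReal) :=
      EReal.coe_lt_coe_iff.mpr hK
    rw [EReal.coe_div] at h2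
    convert h2 using 2
    norm_cast
  exact htendE.limsup_eq
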